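/- Let f ∈ L¹(γ) on ℝ with ∫f dγ = 0, and suppose a is a Gaussian atom associated to an admissible interval B (i.e., supp a ⊆ B, ∫a dγ = 0, ‖a‖_∞ ≤ γ(B)⁻¹). Then for every x > 0, |∫_{x}^{∞} a dγ| + |∫_{−∞}^{−x} a dγ| ≤ 𝟙_B(x) + 𝟙_B(−x), and consequently E(a) := ∫₀^∞ x(|∫_x^∞ a dγ| + |∫_{−∞}^{−x} a dγ|) dx ≤ C for an absolute constant C. -/

import Mathlib

open MeasureTheory
open scoped ENNReal

/-- The Gauss measure on ℝ, with density `π^{-1/2} e^{-x²}`. -/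
noncomputable def gauss1 : Measure ℝ :=
  volume.withDensity fun x => ENNReal.ofReal (Real.pi ^ (-(1 : ℝ) / 2) * Real.exp (-x ^ 2))

/-- `mrad t = min(1, 1/t)`, equal to `1` when `t ≤ 1`. -/
noncomputable def mrad (t : ℝ) : ℝ := if t ≤ 1 then 1 else 1 / t

lemma gauss1_le_volume (s : Set ℝ) (hs : MeasurableSet s) : gauss1 s ≤ volume s := by
  rw [gauss1, withDensity_apply _ hs]
  calc ∫⁻ x in s, ENNReal.ofReal (Real.pi ^ (-(1 : ℝ) / 2) * Real.exp (-x ^ 2)) ∂volume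
      ≤ ∫⁻ _ in s, 1 ∂volume := by
        refine lintegral_mono fun x => ?_
        rw [ENNReal.ofReal_le_one]
        have h1 : Real.pi ^ (-(1 : ℝ) / 2) ≤ 1 :=
          Real.rpow_le_one_of_one_le_of_nonpos (by linarith [Real.pi_gt_three]) (by norm_num)
        have h2 : Real.exp (-x ^ 2) ≤ 1 := Real.exp_le_one_iff.mpr (by nlinarith)
        nlinarith [Real.rpow_nonneg Real.pi_pos.le (-(1:ℝ)/2), Real.exp_pos (-x^2)]
    _ = volume s := by simp

section
variable {c r : ℝ} {a : ℝ → ℝ}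

lemma gauss1_ball_lt_top (hr : 0 < r) : gauss1 (Metric.closedBall c r) < ⊤ :=
  lt_of_le_of_lt (gauss1_le_volume _ measurableSet_closedBall)
    (by rw [Real.volume_closedBall]; exact ENNReal.ofReal_lt_top)

lemma bound_on_ball (hr : 0 < r)
    (ha : Integrable a gauss1)
    (hbd : ∀ x, |a x| ≤ ((gauss1 (Metric.closedBall c r)).toReal)⁻¹)
    (s : Set ℝ) (hs : MeasurableSet s) :
    ‖∫ y in s ∩ Metric.closedBall c r, a y ∂gauss1‖ ≤ 1 := by
  set B := Metric.closedBall c r with hB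
  have hfin : gauss1 (s ∩ B) < ⊤ :=
    lt_of_le_of_lt (measure_mono Set.inter_subset_right) (gauss1_ball_lt_top hr)
  have h1 : ‖∫ y in s ∩ B, a y ∂gauss1‖ ≤
      ((gauss1 B).toReal)⁻¹ * (gauss1 (s ∩ B)).toReal := by
    refine norm_setIntegral_le_of_norm_le_const hfin (fun x _ => ?_)
    · simpa using hbd x
  refine h1.trans ?_
  have h2 : (gauss1 (s ∩ B)).toReal ≤ (gauss1 B).toReal :=
    ENNReal.toReal_mono (gauss1_ball_lt_top hr).ne (measure_mono Set.inter_subset_right)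
  have h3 : ((gauss1 B).toReal)⁻¹ * (gauss1 (s ∩ B)).toReal ≤
      ((gauss1 B).toReal)⁻¹ * (gauss1 B).toReal :=
    mul_le_mul_of_nonneg_left h2 (by positivity)
  refine h3.trans ?_
  rcases eq_or_ne ((gauss1 B).toReal) 0 with h | h
  · simp [h]
  · rw [inv_mul_cancel₀ h]

lemma key_Ioi (hr : 0 < r)
    (hsupp : Function.support a ⊆ Metric.closedBall c r)
    (ha : Integrable a gauss1) (hint : (∫ x, a x ∂gauss1) = 0)
    (hbd : ∀ x, |a x| ≤ ((gauss1 (Metric.closedBall c r)).toReal)⁻¹) (t : ℝ) :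
    |∫ y in Set.Ioi t, a y ∂gauss1| ≤
      (Metric.closedBall c r).indicator (fun _ => (1 : ℝ)) t := by
  set B := Metric.closedBall c r with hB
  have hzero : ∀ y, y ∉ B → a y = 0 := by
    intro y hy; by_contra h; exact hy (hsupp (Function.mem_support.mpr h))
  have ha_ind : B.indicator a = a := Set.indicator_eq_self.mpr hsupp
  by_cases ht : t ∈ B
  · rw [Set.indicator_of_mem ht, ← Real.norm_eq_abs, ← ha_ind,
      setIntegral_indicator measurableSet_closedBall]
    exact bound_on_ball hr ha hbd _ measurableSet_Ioi
  · rw [Set.indicator_of_notMem ht]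
    rw [Metric.mem_closedBall, Real.dist_eq, not_le, lt_abs] at ht
    rcases ht with ht | ht
    · -- r ≤ t - c : t ≥ c + r, so Ioi t misses B
      have : (∫ y in Set.Ioi t, a y ∂gauss1) = 0 := by
        refine setIntegral_eq_zero_of_forall_eq_zero fun y hy => hzero y ?_
        rw [Metric.mem_closedBall, Real.dist_eq]
        intro hmem
        have : y - c ≤ r := (abs_le.mp hmem).2
        have : t < y := hy
        linarith
      simp [this]
    · -- r ≤ c - t : t ≤ c - r, so Iic t misses B
      have hIic : (∫ y in Set.Iic t, a y ∂gauss1) = 0 := by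
        refine setIntegral_eq_zero_of_forall_eq_zero fun y hy => hzero y ?_
        rw [Metric.mem_closedBall, Real.dist_eq]
        intro hmem
        have : -(r) ≤ y - c := (abs_le.mp hmem).1
        have : y ≤ t := hy
        linarith
      have hsplit := integral_add_compl (measurableSet_Iic : MeasurableSet (Set.Iic t)) ha
      rw [Set.compl_Iic, hint, hIic] at hsplit
      have h0 : (∫ y in Set.Ioi t, a y ∂gauss1) = 0 := by linarith
      simp [h0]

lemma key_Iio (hr : 0 < r)
    (hsupp : Function.support a ⊆ Metric.closedBall c r)
    (ha : Integrable a gauss1) (hint : (∫ x, a x ∂gauss1) = 0)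
    (hbd : ∀ x, |a x| ≤ ((gauss1 (Metric.closedBall c r)).toReal)⁻¹) (t : ℝ) :
    |∫ y in Set.Iio t, a y ∂gauss1| ≤
      (Metric.closedBall c r).indicator (fun _ => (1 : ℝ)) t := by
  set B := Metric.closedBall c r with hB
  have hzero : ∀ y, y ∉ B → a y = 0 := by
    intro y hy; by_contra h; exact hy (hsupp (Function.mem_support.mpr h))
  have ha_ind : B.indicator a = a := Set.indicator_eq_self.mpr hsupp
  by_cases ht : t ∈ B
  · rw [Set.indicator_of_mem ht, ← Real.norm_eq_abs, ← ha_ind,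
      setIntegral_indicator measurableSet_closedBall]
    exact bound_on_ball hr ha hbd _ measurableSet_Iio
  · rw [Set.indicator_of_notMem ht]
    rw [Metric.mem_closedBall, Real.dist_eq, not_le, lt_abs] at ht
    rcases ht with ht | ht
    · -- r ≤ t - c : t ≥ c + r, so Ici t misses B
      have hIci : (∫ y in Set.Ici t, a y ∂gauss1) = 0 := by
        refine setIntegral_eq_zero_of_forall_eq_zero fun y hy => hzero y ?_
        rw [Metric.mem_closedBall, Real.dist_eq]
        intro hmem
        have : y - c ≤ r := (abs_le.mp hmem).2
        have : t ≤ y := hy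
        linarith
      have hsplit := integral_add_compl (measurableSet_Iio : MeasurableSet (Set.Iio t)) ha
      rw [Set.compl_Iio, hint, hIci] at hsplit
      have h0 : (∫ y in Set.Iio t, a y ∂gauss1) = 0 := by linarith
      simp [h0]
    · have : (∫ y in Set.Iio t, a y ∂gauss1) = 0 := by
        refine setIntegral_eq_zero_of_forall_eq_zero fun y hy => hzero y ?_
        rw [Metric.mem_closedBall, Real.dist_eq]
        intro hmem
        have : -(r) ≤ y - c := (abs_le.mp hmem).1
        have : y < t := hy
        linarith
      simp [this]

end


theorem stmt_9 :
    ∃ C > 0, ∀ (c r : ℝ) (a : ℝ → ℝ), 0 < r → r ≤ mrad |c| →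
      Function.support a ⊆ Metric.closedBall c r →
      Integrable a gauss1 →
      (∫ x, a x ∂gauss1) = 0 →
      (∀ x, |a x| ≤ ((gauss1 (Metric.closedBall c r)).toReal)⁻¹) →
      (∀ x > (0 : ℝ),
        |∫ y in Set.Ioi x, a y ∂gauss1| + |∫ y in Set.Iio (-x), a y ∂gauss1| ≤
          (Metric.closedBall c r).indicator (fun _ => (1 : ℝ)) x +
            (Metric.closedBall c r).indicator (fun _ => (1 : ℝ)) (-x)) ∧
      (∫ x in Set.Ioi (0 : ℝ),
          x * (|∫ y in Set.Ioi x, a y ∂gauss1| + |∫ y in Set.Iio (-x), a y ∂gauss1|)) ≤ C := by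
  refine ⟨8, by norm_num, fun c r a hr hrad hsupp ha hint hbd => ?_⟩
  have hpt1 := key_Ioi hr hsupp ha hint hbd
  have hpt2 := key_Iio hr hsupp ha hint hbd
  have hc0 : (0:ℝ) ≤ |c| := abs_nonneg c
  unfold mrad at hrad
  have hr1 : r ≤ 1 := by
    split_ifs at hrad with hc
    · exact hrad
    · push_neg at hc
      have h1 : 1/|c| ≤ 1 := by
        rw [div_le_one (by linarith)]; linarith
      linarith
  have hrc : r * |c| ≤ 1 := by
    split_ifs at hrad with hc
    · nlinarith
    · push_neg at hc
      have hcpos : (0:ℝ) < |c| := by linarith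
      have := mul_le_mul_of_nonneg_right hrad hcpos.le
      rwa [div_mul_cancel₀ _ hcpos.ne'] at this
  constructor
  · intro x _
    exact add_le_add (hpt1 x) (hpt2 (-x))
  · set B := Metric.closedBall c r with hB
    set B' := Metric.closedBall (-c) r with hB'
    have hswap : ∀ x : ℝ, B.indicator (fun _ => (1:ℝ)) (-x) =
        B'.indicator (fun _ => (1:ℝ)) x := by
      intro x
      have hiff : -x ∈ B ↔ x ∈ B' := by
        rw [hB, hB', Metric.mem_closedBall, Metric.mem_closedBall, Real.dist_eq,
          Real.dist_eq, show -x - c = -(x - -c) by ring, abs_neg]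
      by_cases hm : x ∈ B'
      · rw [Set.indicator_of_mem (hiff.mpr hm), Set.indicator_of_mem hm]
      · rw [Set.indicator_of_notMem (fun h => hm (hiff.mp h)), Set.indicator_of_notMem hm]
    set h : ℝ → ℝ := fun x => (|c| + 1) *
      (B.indicator (fun _ => (1:ℝ)) x + B'.indicator (fun _ => (1:ℝ)) x) with hh
    have hind : ∀ (s : Set ℝ) (c₀ : ℝ), Integrable ((Metric.closedBall c₀ r).indicator
        (fun _ => (1:ℝ))) volume := by
      intro s c₀
      rw [integrable_indicator_iff measurableSet_closedBall]
      exact (integrableOn_const_iff (C := (1:ℝ))).mpr (Or.inr (by rw [Real.volume_closedBall]; exact ENNReal.ofReal_lt_top))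
    have hh_int : Integrable h volume := (((hind ∅ c).add (hind ∅ (-c))).const_mul _)
    have hterm : ∀ (x : ℝ), 0 < x → ∀ c₀ : ℝ, c₀ ≤ |c| →
        x * (Metric.closedBall c₀ r).indicator (fun _ => (1:ℝ)) x ≤
          (|c| + 1) * (Metric.closedBall c₀ r).indicator (fun _ => (1:ℝ)) x := by
      intro x hx c₀ hcc
      by_cases hm : x ∈ Metric.closedBall c₀ r
      · rw [Set.indicator_of_mem hm]
        have := (abs_le.mp (by rwa [Metric.mem_closedBall, Real.dist_eq] at hm)).2
        simp only [mul_one]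
        linarith
      · rw [Set.indicator_of_notMem hm]; simp
    have hmono : ∀ x ∈ Set.Ioi (0:ℝ),
        x * (|∫ y in Set.Ioi x, a y ∂gauss1| + |∫ y in Set.Iio (-x), a y ∂gauss1|) ≤ h x := by
      intro x hx
      have hx0 : (0:ℝ) < x := hx
      have step1 : x * (|∫ y in Set.Ioi x, a y ∂gauss1| + |∫ y in Set.Iio (-x), a y ∂gauss1|) ≤
          x * (B.indicator (fun _ => (1:ℝ)) x + B.indicator (fun _ => (1:ℝ)) (-x)) :=
        mul_le_mul_of_nonneg_left (add_le_add (hpt1 x) (hpt2 (-x))) hx0.le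
      refine step1.trans ?_
      rw [hswap x]
      simp only [hh]
      have t1 := hterm x hx0 c (le_abs_self c)
      have t2 := hterm x hx0 (-c) ((le_abs_self (-c)).trans_eq (abs_neg c))
      rw [← hB] at t1
      rw [← hB'] at t2
      simp only [mul_add]
      exact add_le_add t1 t2
    have hle1 : (∫ x in Set.Ioi (0:ℝ),
        x * (|∫ y in Set.Ioi x, a y ∂gauss1| + |∫ y in Set.Iio (-x), a y ∂gauss1|)) ≤
        ∫ x in Set.Ioi (0:ℝ), h x := by
      refine integral_mono_of_nonneg ?_ hh_int.restrict ?_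
      · refine (ae_restrict_iff' measurableSet_Ioi).mpr (ae_of_all _ fun x hx => ?_)
        exact mul_nonneg (le_of_lt hx) (by positivity)
      · exact (ae_restrict_iff' measurableSet_Ioi).mpr (ae_of_all _ hmono)
    refine hle1.trans ?_
    have hh_nonneg : 0 ≤ᵐ[volume] h := ae_of_all _ fun x => by
      have i1 : (0:ℝ) ≤ B.indicator (fun _ => (1:ℝ)) x := Set.indicator_nonneg (fun _ _ => zero_le_one) x
      have i2 : (0:ℝ) ≤ B'.indicator (fun _ => (1:ℝ)) x := Set.indicator_nonneg (fun _ _ => zero_le_one) x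
      rw [hh]
      positivity
    have hle2 : (∫ x in Set.Ioi (0:ℝ), h x) ≤ ∫ x, h x := by
      exact setIntegral_le_integral hh_int hh_nonneg
    refine hle2.trans ?_
    have hvol : ∀ c₀ : ℝ, (∫ x, (Metric.closedBall c₀ r).indicator (fun _ => (1:ℝ)) x) = 2 * r := by
      intro c₀
      rw [integral_indicator_const (1:ℝ) measurableSet_closedBall, measureReal_def, Real.volume_closedBall,
        ENNReal.toReal_ofReal (by linarith), smul_eq_mul, mul_one]
    have heq : (∫ x, h x) = (|c| + 1) * (2 * r + 2 * r) := by
      simp only [hh]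
      rw [integral_const_mul, integral_add ((hind ∅ c)) ((hind ∅ (-c)))]
      rw [hvol c, hvol (-c)]
    rw [heq]
    nlinarith
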